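/- Let a > 1 and let x ∈ [1,∞)⁶ satisfy xᵢ ≤ a for all 2 ≤ i ≤ 6. Then φ(x) ≤ max { φ(x₁, a, a, 1, a, a), φ(x₁, a, 1, 1, a, 1), φ(x₁, a, a, 1, a, 1) }. -/

import Mathlib

open Real

/-- Core endpoint lemma: a function `u ↦ (α u + β)/√(u² + 2bu + c)` whose
derivative numerator `(αb - β)u + (αc - βb)` has nonnegative slope attains its
maximum on `[1, aa]` at an endpoint. -/
lemma endpoint_core (α β b c : ℝ) (hk : β ≤ α * b)
    (hb : 0 ≤ b) (hc : 0 < 1 + 2 * b + c) {aa u : ℝ} (hu1 : 1 ≤ u) (hua : u ≤ aa) :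
    (α * u + β) / Real.sqrt (u ^ 2 + 2 * b * u + c) ≤
      max ((α * 1 + β) / Real.sqrt (1 ^ 2 + 2 * b * 1 + c))
        ((α * aa + β) / Real.sqrt (aa ^ 2 + 2 * b * aa + c)) := by
  set F : ℝ → ℝ := fun x => (α * x + β) / Real.sqrt (x ^ 2 + 2 * b * x + c) with hF
  have hQ : ∀ x : ℝ, 1 ≤ x → 0 < x ^ 2 + 2 * b * x + c := by
    intro x hx; nlinarith
  have hder : ∀ x : ℝ, 1 ≤ x → HasDerivAt F
      ((α * (x ^ 2 + 2 * b * x + c) - (α * x + β) * (x + b)) /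
        ((x ^ 2 + 2 * b * x + c) * Real.sqrt (x ^ 2 + 2 * b * x + c))) x := by
    intro x hx
    have hQx := hQ x hx
    have hs : 0 < Real.sqrt (x ^ 2 + 2 * b * x + c) := Real.sqrt_pos.mpr hQx
    have h1 : HasDerivAt (fun y : ℝ => y ^ 2 + 2 * b * y + c) (2 * x + 2 * b) x := by
      have h := ((hasDerivAt_pow 2 x).add ((hasDerivAt_id x).const_mul (2 * b))).add_const c
      simpa [mul_comm] using h
    have h2 : HasDerivAt (fun y : ℝ => Real.sqrt (y ^ 2 + 2 * b * y + c))
        (1 / (2 * Real.sqrt (x ^ 2 + 2 * b * x + c)) * (2 * x + 2 * b)) x :=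
      (Real.hasDerivAt_sqrt hQx.ne').comp x h1
    have hL : HasDerivAt (fun y : ℝ => α * y + β) α x := by
      simpa using ((hasDerivAt_id x).const_mul α).add_const β
    have h3 := hL.div h2 hs.ne'
    refine h3.congr_deriv ?_
    symm
    have hs2 : Real.sqrt (x ^ 2 + 2 * b * x + c) ^ 2 = x ^ 2 + 2 * b * x + c :=
      Real.sq_sqrt hQx.le
    have hs0 := hs.ne'
    generalize Real.sqrt (x ^ 2 + 2 * b * x + c) = S at hs2 hs0 ⊢
    rw [← hs2]
    field_simp
  have key : F u ≤ max (F 1) (F aa) := by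
    by_cases hg : α * (u ^ 2 + 2 * b * u + c) - (α * u + β) * (u + b) ≤ 0
    · have hanti : AntitoneOn F (Set.Icc 1 u) := by
        apply antitoneOn_of_deriv_nonpos (convex_Icc 1 u)
        · intro x hx
          exact ((hder x hx.1).continuousAt).continuousWithinAt
        · intro x hx
          rw [interior_Icc] at hx
          exact (hder x hx.1.le).differentiableAt.differentiableWithinAt
        · intro x hx
          rw [interior_Icc] at hx
          rw [(hder x hx.1.le).deriv]
          apply div_nonpos_of_nonpos_of_nonneg
          · nlinarith [mul_nonneg (sub_nonneg.2 hk) (sub_nonneg.2 hx.2.le)]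
          · have := hQ x hx.1.le
            positivity
      have h := hanti (Set.mem_Icc.mpr ⟨le_refl 1, hu1⟩) (Set.mem_Icc.mpr ⟨hu1, le_refl u⟩) hu1
      exact le_max_of_le_left h
    · push_neg at hg
      have hmono : MonotoneOn F (Set.Icc u aa) := by
        apply monotoneOn_of_deriv_nonneg (convex_Icc u aa)
        · intro x hx
          exact ((hder x (hu1.trans hx.1)).continuousAt).continuousWithinAt
        · intro x hx
          rw [interior_Icc] at hx
          exact (hder x (hu1.trans hx.1.le)).differentiableAt.differentiableWithinAt
        · intro x hx
          rw [interior_Icc] at hx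
          rw [(hder x (hu1.trans hx.1.le)).deriv]
          apply div_nonneg
          · nlinarith [mul_nonneg (sub_nonneg.2 hk) (sub_nonneg.2 hx.1.le)]
          · have := hQ x (hu1.trans hx.1.le)
            positivity
      have h := hmono (Set.mem_Icc.mpr ⟨le_refl u, hua⟩) (Set.mem_Icc.mpr ⟨hua, le_refl aa⟩) hua
      exact le_max_of_le_right h
  simpa [F] using key

lemma endpoint_E (α β b c E : ℝ) (hE : 0 < E) (hk : β ≤ α * b)
    (hb : 0 ≤ b) (hc : 0 < 1 + 2 * b + c) {aa u : ℝ} (hu1 : 1 ≤ u) (hua : u ≤ aa) :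
    (α * u + β) / (Real.sqrt (u ^ 2 + 2 * b * u + c) * E) ≤
      max ((α * 1 + β) / (Real.sqrt (1 ^ 2 + 2 * b * 1 + c) * E))
        ((α * aa + β) / (Real.sqrt (aa ^ 2 + 2 * b * aa + c) * E)) := by
  have h := endpoint_core α β b c hk hb hc hu1 hua
  rw [div_mul_eq_div_div, div_mul_eq_div_div, div_mul_eq_div_div]
  rcases le_max_iff.mp h with h' | h'
  · exact le_max_of_le_left ((div_le_div_iff_of_pos_right hE).mpr h')
  · exact le_max_of_le_right ((div_le_div_iff_of_pos_right hE).mpr h')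

lemma endpoint_E' (α β b c E : ℝ) (hE : 0 < E) (hk : β ≤ α * b)
    (hb : 0 ≤ b) (hc : 0 < 1 + 2 * b + c) {aa u : ℝ} (hu1 : 1 ≤ u) (hua : u ≤ aa) :
    (α * u + β) / (E * Real.sqrt (u ^ 2 + 2 * b * u + c)) ≤
      max ((α * 1 + β) / (E * Real.sqrt (1 ^ 2 + 2 * b * 1 + c)))
        ((α * aa + β) / (E * Real.sqrt (aa ^ 2 + 2 * b * aa + c))) := by
  rw [mul_comm E, mul_comm E, mul_comm E]
  exact endpoint_E α β b c E hE hk hb hc hu1 hua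

/-- The cosine of the dihedral angle at the edge `e₁` of a generalized hyper-ideal
tetrahedron whose edge lengths `lᵢ` satisfy `cosh lᵢ = xᵢ`. -/
noncomputable def phi (x1 x2 x3 x4 x5 x6 : ℝ) : ℝ :=
  (x2 * x3 + x5 * x6 + x1 * x2 * x5 + x1 * x3 * x6 - x1 ^ 2 * x4 + x4) /
    (Real.sqrt (2 * x1 * x2 * x6 + x1 ^ 2 + x2 ^ 2 + x6 ^ 2 - 1) *
      Real.sqrt (2 * x1 * x3 * x5 + x1 ^ 2 + x3 ^ 2 + x5 ^ 2 - 1))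

lemma red4 (t u v p q s : ℝ) (ht : 1 ≤ t) (hu : 1 ≤ u) (hv : 1 ≤ v) (hp : 1 ≤ p)
    (hq : 1 ≤ q) (hs : 1 ≤ s) : phi t u v s p q ≤ phi t u v 1 p q := by
  unfold phi
  have hA : 0 < Real.sqrt (2 * t * u * q + t ^ 2 + u ^ 2 + q ^ 2 - 1) := by
    apply Real.sqrt_pos.mpr
    have g1 : (1:ℝ) ≤ t * u := by nlinarith
    have g2 : (1:ℝ) ≤ t * u * q := by nlinarith
    nlinarith
  have hB : 0 < Real.sqrt (2 * t * v * p + t ^ 2 + v ^ 2 + p ^ 2 - 1) := by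
    apply Real.sqrt_pos.mpr
    have g1 : (1:ℝ) ≤ t * v := by nlinarith
    have g2 : (1:ℝ) ≤ t * v * p := by nlinarith
    nlinarith
  rw [div_le_div_iff₀ (mul_pos hA hB) (mul_pos hA hB)]
  have hfac : (0:ℝ) ≤ (t ^ 2 - 1) * (s - 1) :=
    mul_nonneg (by nlinarith) (by linarith)
  nlinarith [mul_nonneg hfac (mul_pos hA hB).le]

lemma red2 (a t v p q u : ℝ) (ht : 1 ≤ t) (hv : 1 ≤ v) (hp : 1 ≤ p) (hq : 1 ≤ q)
    (hu1 : 1 ≤ u) (hua : u ≤ a) :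
    phi t u v 1 p q ≤ max (phi t 1 v 1 p q) (phi t a v 1 p q) := by
  have e : ∀ z : ℝ, phi t z v 1 p q =
      ((v + t * p) * z + (p * q + t * v * q + 1 - t ^ 2)) /
        (Real.sqrt (z ^ 2 + 2 * (t * q) * z + (t ^ 2 + q ^ 2 - 1)) *
          Real.sqrt (2 * t * v * p + t ^ 2 + v ^ 2 + p ^ 2 - 1)) := by
    intro z
    unfold phi
    rw [show 2 * t * z * q + t ^ 2 + z ^ 2 + q ^ 2 - 1
        = z ^ 2 + 2 * (t * q) * z + (t ^ 2 + q ^ 2 - 1) by ring]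
    congr 1
    ring
  rw [e u, e 1, e a]
  apply endpoint_E
  · apply Real.sqrt_pos.mpr
    have g1 : (1:ℝ) ≤ t * v := by nlinarith
    have g2 : (1:ℝ) ≤ t * v * p := by nlinarith
    nlinarith
  · nlinarith [mul_nonneg (show (0:ℝ) ≤ t ^ 2 - 1 by nlinarith)
      (show (0:ℝ) ≤ p * q + 1 by nlinarith)]
  · positivity
  · nlinarith
  · exact hu1
  · exact hua

lemma red3 (a t u p q v : ℝ) (ht : 1 ≤ t) (hu : 1 ≤ u) (hp : 1 ≤ p) (hq : 1 ≤ q)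
    (hv1 : 1 ≤ v) (hva : v ≤ a) :
    phi t u v 1 p q ≤ max (phi t u 1 1 p q) (phi t u a 1 p q) := by
  have e : ∀ z : ℝ, phi t u z 1 p q =
      ((u + t * q) * z + (p * q + t * u * p + 1 - t ^ 2)) /
        (Real.sqrt (2 * t * u * q + t ^ 2 + u ^ 2 + q ^ 2 - 1) *
          Real.sqrt (z ^ 2 + 2 * (t * p) * z + (t ^ 2 + p ^ 2 - 1))) := by
    intro z
    unfold phi
    rw [show 2 * t * z * p + t ^ 2 + z ^ 2 + p ^ 2 - 1
        = z ^ 2 + 2 * (t * p) * z + (t ^ 2 + p ^ 2 - 1) by ring]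
    congr 1
    ring
  rw [e v, e 1, e a]
  apply endpoint_E'
  · apply Real.sqrt_pos.mpr
    have g1 : (1:ℝ) ≤ t * u := by nlinarith
    have g2 : (1:ℝ) ≤ t * u * q := by nlinarith
    nlinarith
  · nlinarith [mul_nonneg (show (0:ℝ) ≤ t ^ 2 - 1 by nlinarith)
      (show (0:ℝ) ≤ p * q + 1 by nlinarith)]
  · positivity
  · nlinarith
  · exact hv1
  · exact hva

lemma red5 (a t u v q p : ℝ) (ht : 1 ≤ t) (hu : 1 ≤ u) (hv : 1 ≤ v) (hq : 1 ≤ q)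
    (hp1 : 1 ≤ p) (hpa : p ≤ a) :
    phi t u v 1 p q ≤ max (phi t u v 1 1 q) (phi t u v 1 a q) := by
  have e : ∀ z : ℝ, phi t u v 1 z q =
      ((q + t * u) * z + (u * v + t * v * q + 1 - t ^ 2)) /
        (Real.sqrt (2 * t * u * q + t ^ 2 + u ^ 2 + q ^ 2 - 1) *
          Real.sqrt (z ^ 2 + 2 * (t * v) * z + (t ^ 2 + v ^ 2 - 1))) := by
    intro z
    unfold phi
    rw [show 2 * t * v * z + t ^ 2 + v ^ 2 + z ^ 2 - 1
        = z ^ 2 + 2 * (t * v) * z + (t ^ 2 + v ^ 2 - 1) by ring]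
    congr 1
    ring
  rw [e p, e 1, e a]
  apply endpoint_E'
  · apply Real.sqrt_pos.mpr
    have g1 : (1:ℝ) ≤ t * u := by nlinarith
    have g2 : (1:ℝ) ≤ t * u * q := by nlinarith
    nlinarith
  · nlinarith [mul_nonneg (show (0:ℝ) ≤ t ^ 2 - 1 by nlinarith)
      (show (0:ℝ) ≤ u * v + 1 by nlinarith)]
  · positivity
  · nlinarith
  · exact hp1
  · exact hpa

lemma red6 (a t u v p q : ℝ) (ht : 1 ≤ t) (hu : 1 ≤ u) (hv : 1 ≤ v) (hp : 1 ≤ p)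
    (hq1 : 1 ≤ q) (hqa : q ≤ a) :
    phi t u v 1 p q ≤ max (phi t u v 1 p 1) (phi t u v 1 p a) := by
  have e : ∀ z : ℝ, phi t u v 1 p z =
      ((p + t * v) * z + (u * v + t * u * p + 1 - t ^ 2)) /
        (Real.sqrt (z ^ 2 + 2 * (t * u) * z + (t ^ 2 + u ^ 2 - 1)) *
          Real.sqrt (2 * t * v * p + t ^ 2 + v ^ 2 + p ^ 2 - 1)) := by
    intro z
    unfold phi
    rw [show 2 * t * u * z + t ^ 2 + u ^ 2 + z ^ 2 - 1
        = z ^ 2 + 2 * (t * u) * z + (t ^ 2 + u ^ 2 - 1) by ring]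
    congr 1
    ring
  rw [e q, e 1, e a]
  apply endpoint_E
  · apply Real.sqrt_pos.mpr
    have g1 : (1:ℝ) ≤ t * v := by nlinarith
    have g2 : (1:ℝ) ≤ t * v * p := by nlinarith
    nlinarith
  · nlinarith [mul_nonneg (show (0:ℝ) ≤ t ^ 2 - 1 by nlinarith)
      (show (0:ℝ) ≤ u * v + 1 by nlinarith)]
  · positivity
  · nlinarith
  · exact hq1
  · exact hqa

set_option maxHeartbeats 1600000 in
theorem phi_upper_bound_three_configs (a x1 x2 x3 x4 x5 x6 : ℝ) (ha : 1 < a)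
    (h1 : 1 ≤ x1) (h2 : 1 ≤ x2) (h3 : 1 ≤ x3) (h4 : 1 ≤ x4) (h5 : 1 ≤ x5) (h6 : 1 ≤ x6)
    (h2a : x2 ≤ a) (h3a : x3 ≤ a) (h4a : x4 ≤ a) (h5a : x5 ≤ a) (h6a : x6 ≤ a) :
    phi x1 x2 x3 x4 x5 x6 ≤
      max (phi x1 a a 1 a a) (max (phi x1 a 1 1 a 1) (phi x1 a a 1 a 1)) := by
  have haa : (1:ℝ) ≤ a := ha.le
  have ht1 : (0:ℝ) < x1 + 1 := by linarith
  have hta : (0:ℝ) < x1 + a := by linarith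
  have hWrad : (0:ℝ) < 2 * x1 * a * a + x1 ^ 2 + a ^ 2 + a ^ 2 - 1 := by nlinarith
  have hw : 0 < Real.sqrt (2 * x1 * a * a + x1 ^ 2 + a ^ 2 + a ^ 2 - 1) :=
    Real.sqrt_pos.mpr hWrad
  have hww : Real.sqrt (2 * x1 * a * a + x1 ^ 2 + a ^ 2 + a ^ 2 - 1) *
      Real.sqrt (2 * x1 * a * a + x1 ^ 2 + a ^ 2 + a ^ 2 - 1) =
      2 * x1 * a * a + x1 ^ 2 + a ^ 2 + a ^ 2 - 1 := Real.mul_self_sqrt hWrad.le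
  have e11 : Real.sqrt (2 * x1 * 1 * 1 + x1 ^ 2 + 1 ^ 2 + 1 ^ 2 - 1) = x1 + 1 := by
    rw [show 2 * x1 * 1 * 1 + x1 ^ 2 + 1 ^ 2 + 1 ^ 2 - 1 = (x1 + 1) ^ 2 by ring]
    exact Real.sqrt_sq (by linarith)
  have ea1 : Real.sqrt (2 * x1 * a * 1 + x1 ^ 2 + a ^ 2 + 1 ^ 2 - 1) = x1 + a := by
    rw [show 2 * x1 * a * 1 + x1 ^ 2 + a ^ 2 + 1 ^ 2 - 1 = (x1 + a) ^ 2 by ring]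
    exact Real.sqrt_sq (by linarith)
  have e1a : Real.sqrt (2 * x1 * 1 * a + x1 ^ 2 + 1 ^ 2 + a ^ 2 - 1) = x1 + a := by
    rw [show 2 * x1 * 1 * a + x1 ^ 2 + 1 ^ 2 + a ^ 2 - 1 = (x1 + a) ^ 2 by ring]
    exact Real.sqrt_sq (by linarith)
  have ht2 : (0:ℝ) ≤ x1 ^ 2 - 1 := by nlinarith
  have ha2 : (0:ℝ) ≤ a ^ 2 - 1 := by nlinarith
  have ha1m : (0:ℝ) ≤ a - 1 := by linarith
  have hfac2 : (0:ℝ) ≤ 2 * a ^ 2 - a - 1 := by nlinarith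
  have hfac4 : (0:ℝ) ≤ 2 * a * x1 + a + 1 := by nlinarith
  set R := max (phi x1 a a 1 a a) (max (phi x1 a 1 1 a 1) (phi x1 a a 1 a 1)) with hR
  have hG1 : phi x1 a a 1 a a ≤ R := le_max_left _ _
  have hG2 : phi x1 a 1 1 a 1 ≤ R := le_max_of_le_right (le_max_left _ _)
  have hG3 : phi x1 a a 1 a 1 ≤ R := le_max_of_le_right (le_max_right _ _)
  -- the 16 corner bounds
  have hcor : ∀ u v p q : ℝ, (u = 1 ∨ u = a) → (v = 1 ∨ v = a) → (p = 1 ∨ p = a) →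
      (q = 1 ∨ q = a) → phi x1 u v 1 p q ≤ R := by
    rintro u v p q (rfl | rfl) (rfl | rfl) (rfl | rfl) (rfl | rfl)
    · -- (1,1,1,1) → G1
      refine le_trans ?_ hG1
      simp only [phi]
      rw [e11, div_le_div_iff₀ (mul_pos ht1 ht1) (mul_pos hw hw), hww]
      nlinarith [mul_nonneg (mul_nonneg (sub_nonneg.2 h1) ha2) (mul_pos ht1 ht1).le]
    · -- (1,1,1,a) → G1 (C2)
      refine le_trans ?_ hG1
      simp only [phi]
      rw [e1a, e11, div_le_div_iff₀ (mul_pos hta ht1) (mul_pos hw hw), hww]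
      nlinarith [mul_nonneg (mul_nonneg (sub_nonneg.2 h1)
        hfac2) (mul_pos ht1 ht1).le]
    · -- (1,1,a,1) → G1 (C2)
      refine le_trans ?_ hG1
      simp only [phi]
      rw [e11, e1a, div_le_div_iff₀ (mul_pos ht1 hta) (mul_pos hw hw), hww]
      nlinarith [mul_nonneg (mul_nonneg (sub_nonneg.2 h1)
        hfac2) (mul_pos ht1 ht1).le]
    · -- (1,1,a,a) → G1 (C4)
      refine le_trans ?_ hG1
      simp only [phi]
      rw [e1a, div_le_div_iff₀ (mul_pos hta hta) (mul_pos hw hw), hww]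
      nlinarith [mul_nonneg (mul_nonneg ht2 ha1m)
        hfac4]
    · -- (1,a,1,1) → G1 (C2)
      refine le_trans ?_ hG1
      simp only [phi]
      rw [e11, ea1, div_le_div_iff₀ (mul_pos ht1 hta) (mul_pos hw hw), hww]
      nlinarith [mul_nonneg (mul_nonneg (sub_nonneg.2 h1)
        hfac2) (mul_pos ht1 ht1).le]
    · -- (1,a,1,a) → G2
      refine le_trans ?_ hG2
      simp only [phi]
      rw [e1a, ea1, div_le_div_iff₀ (mul_pos hta hta) (mul_pos hta hta)]
      exact le_of_eq (by ring)
    · -- (1,a,a,1) → G3 (C7)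
      refine le_trans ?_ hG3
      simp only [phi]
      rw [e11, ea1, div_le_div_iff₀ (mul_pos ht1 hw) (mul_pos hta hw)]
      nlinarith [mul_nonneg (mul_nonneg (mul_nonneg ht1.le (sub_nonneg.2 h1)) ha2) hw.le]
    · -- (1,a,a,a) → G3 (equal value)
      refine le_trans ?_ hG3
      simp only [phi]
      rw [e1a, ea1, div_le_div_iff₀ (mul_pos hta hw) (mul_pos hta hw)]
      exact le_of_eq (by ring)
    · -- (a,1,1,1) → G1 (C2)
      refine le_trans ?_ hG1
      simp only [phi]
      rw [ea1, e11, div_le_div_iff₀ (mul_pos hta ht1) (mul_pos hw hw), hww]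
      nlinarith [mul_nonneg (mul_nonneg (sub_nonneg.2 h1)
        hfac2) (mul_pos ht1 ht1).le]
    · -- (a,1,1,a) → G3 (C7)
      refine le_trans ?_ hG3
      simp only [phi]
      rw [e11, ea1, div_le_div_iff₀ (mul_pos hw ht1) (mul_pos hta hw)]
      nlinarith [mul_nonneg (mul_nonneg (mul_nonneg ht1.le (sub_nonneg.2 h1)) ha2) hw.le]
    · -- (a,1,a,1) = G2
      exact hG2
    · -- (a,1,a,a) → G3 (equal value)
      refine le_trans ?_ hG3
      simp only [phi]
      rw [e1a, ea1, div_le_div_iff₀ (mul_pos hw hta) (mul_pos hta hw)]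
      exact le_of_eq (by ring)
    · -- (a,a,1,1) → G1 (C4)
      refine le_trans ?_ hG1
      simp only [phi]
      rw [ea1, div_le_div_iff₀ (mul_pos hta hta) (mul_pos hw hw), hww]
      nlinarith [mul_nonneg (mul_nonneg ht2 ha1m)
        hfac4]
    · -- (a,a,1,a) → G3 (equal value)
      refine le_trans ?_ hG3
      simp only [phi]
      rw [ea1, div_le_div_iff₀ (mul_pos hw hta) (mul_pos hta hw)]
      exact le_of_eq (by ring)
    · -- (a,a,a,1) = G3
      exact hG3
    · -- (a,a,a,a) = G1
      exact hG1
  have one_le : ∀ z : ℝ, (z = 1 ∨ z = a) → 1 ≤ z := by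
    rintro z (rfl | rfl) <;> linarith
  have lev6 : ∀ u v p : ℝ, (u = 1 ∨ u = a) → (v = 1 ∨ v = a) → (p = 1 ∨ p = a) →
      phi x1 u v 1 p x6 ≤ R := by
    intro u v p hu hv hp
    refine (red6 a x1 u v p x6 h1 (one_le u hu) (one_le v hv) (one_le p hp) h6 h6a).trans
      (max_le ?_ ?_)
    · exact hcor u v p 1 hu hv hp (Or.inl rfl)
    · exact hcor u v p a hu hv hp (Or.inr rfl)
  have lev5 : ∀ u v : ℝ, (u = 1 ∨ u = a) → (v = 1 ∨ v = a) →
      phi x1 u v 1 x5 x6 ≤ R := by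
    intro u v hu hv
    refine (red5 a x1 u v x6 x5 h1 (one_le u hu) (one_le v hv) h6 h5 h5a).trans
      (max_le ?_ ?_)
    · exact lev6 u v 1 hu hv (Or.inl rfl)
    · exact lev6 u v a hu hv (Or.inr rfl)
  have lev3 : ∀ u : ℝ, (u = 1 ∨ u = a) → phi x1 u x3 1 x5 x6 ≤ R := by
    intro u hu
    refine (red3 a x1 u x5 x6 x3 h1 (one_le u hu) h5 h6 h3 h3a).trans (max_le ?_ ?_)
    · exact lev5 u 1 hu (Or.inl rfl)
    · exact lev5 u a hu (Or.inr rfl)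
  have lev2 : phi x1 x2 x3 1 x5 x6 ≤ R := by
    refine (red2 a x1 x3 x5 x6 x2 h1 h3 h5 h6 h2 h2a).trans (max_le ?_ ?_)
    · exact lev3 1 (Or.inl rfl)
    · exact lev3 a (Or.inr rfl)
  exact (red4 x1 x2 x3 x5 x6 x4 h1 h2 h3 h5 h6 h4).trans lev2
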